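/- arXiv:2405.10117 — 4 statements merged into one kernel-verified Lean document; each statement's English description precedes it below -/
import Mathlib

section
/- Let E0 > 0, k ∈ ℂ, λ ∈ ℂ with λ² = E0² + k², ζ := k + λ nonzero, and E ∈ ℂ² with ‖E‖ = E0. Let J = diag(1,−1,−1), Q = [[0, −Eᵀ],[E*, 0₂ₓ₂]] (3×3), X := ikJ + Q, Λ := diag(λ, −k, −λ), and let Y(ζ) be the eigenvector matrix with columns (1, −iE*/ζ)ᵀ, (0, (E^⊥)*/E0)ᵀ, (−iE0/ζ, E*/E0)ᵀ. Then X·Y(ζ) = i·Y(ζ)·Λ. -/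
open Matrix Complex

set_option maxHeartbeats 1600000 in
/-- Eigenvalue relation X·Y(ζ) = i·Y(ζ)·Λ for the asymptotic scattering matrix
X = ikJ + Q of the CMBE Lax pair, with Λ = diag(λ, −k, −λ). -/
theorem stmt3 (E0 : ℝ) (hE0 : 0 < E0) (k lam : ℂ)
    (hlam : lam^2 = (E0 : ℂ)^2 + k^2) (hζ : k + lam ≠ 0)
    (E : Fin 2 → ℂ) (hE : ‖E 0‖^2 + ‖E 1‖^2 = E0^2) :
    let ζ : ℂ := k + lam
    let J : Matrix (Fin 3) (Fin 3) ℂ := Matrix.diagonal ![1, -1, -1]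
    let Q : Matrix (Fin 3) (Fin 3) ℂ :=
      !![0, -(E 0), -(E 1); starRingEnd ℂ (E 0), 0, 0; starRingEnd ℂ (E 1), 0, 0]
    let X : Matrix (Fin 3) (Fin 3) ℂ := (Complex.I*k) • J + Q
    let L : Matrix (Fin 3) (Fin 3) ℂ := Matrix.diagonal ![lam, -k, -lam]
    let Y : Matrix (Fin 3) (Fin 3) ℂ :=
      !![1, 0, -Complex.I*E0/ζ;
         -Complex.I*(starRingEnd ℂ (E 0))/ζ, (E 1)/E0, (starRingEnd ℂ (E 0))/E0;
         -Complex.I*(starRingEnd ℂ (E 1))/ζ, -(E 0)/E0, (starRingEnd ℂ (E 1))/E0]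
    X * Y = Complex.I • (Y * L) := by
  intro ζ J Q X L Y
  have hE' : starRingEnd ℂ (E 0) * E 0 + starRingEnd ℂ (E 1) * E 1 = (E0:ℂ)^2 := by
    have h0 : starRingEnd ℂ (E 0) * E 0 = ((‖E 0‖)^2 : ℝ) := by
      rw [← Complex.normSq_eq_conj_mul_self, Complex.sq_norm]
    have h1 : starRingEnd ℂ (E 1) * E 1 = ((‖E 1‖)^2 : ℝ) := by
      rw [← Complex.normSq_eq_conj_mul_self, Complex.sq_norm]
    rw [h0, h1]
    exact_mod_cast congrArg (Complex.ofReal) hE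
  have hE0' : (E0:ℂ) ≠ 0 := by exact_mod_cast hE0.ne'
  have hX : X = !![Complex.I*k, -(E 0), -(E 1);
      starRingEnd ℂ (E 0), -(Complex.I*k), 0;
      starRingEnd ℂ (E 1), 0, -(Complex.I*k)] := by
    ext i j
    fin_cases i <;> fin_cases j <;> simp [X, Q, J, Matrix.vecHead, Matrix.vecTail, Matrix.add_apply, Matrix.smul_apply, Matrix.diagonal_apply]
  have hYL : Y * L = !![lam, 0, Complex.I*E0*lam/ζ;
      -Complex.I*(starRingEnd ℂ (E 0))*lam/ζ, -(E 1)*k/E0, -(starRingEnd ℂ (E 0))*lam/E0;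
      -Complex.I*(starRingEnd ℂ (E 1))*lam/ζ, (E 0)*k/E0, -(starRingEnd ℂ (E 1))*lam/E0] := by
    ext i j
    fin_cases i <;> fin_cases j <;>
      simp [Y, L, Matrix.mul_diagonal, Matrix.diagonal_apply] <;> ring
  rw [hX, hYL]
  ext i j
  fin_cases i <;> fin_cases j <;>
    simp [Y, ζ, Matrix.mul_apply, Fin.sum_univ_three] <;>
    field_simp <;> ring_nf
  all_goals first
    | tauto
    | linear_combination Complex.I*hE' - Complex.I*hlam
    | linear_combination (-((k+lam)^2 * (E0:ℂ)^3)) * Complex.I_sq - ((k+lam)^2 * (E0:ℂ)) * hE'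
    | linear_combination ((starRingEnd ℂ) (E 0) * (k+lam)) * Complex.I_sq
    | linear_combination ((starRingEnd ℂ) (E 1) * (k+lam)) * Complex.I_sq
    | linear_combination ((starRingEnd ℂ) (E 0) * Complex.I * (E0:ℂ)) * hlam
    | linear_combination ((starRingEnd ℂ) (E 1) * Complex.I * (E0:ℂ)) * hlam
    | linear_combination hE' - hlam
    | linear_combination (-(k+lam)) * hE' - ((k+lam) * (E0:ℂ)^2) * Complex.I_sq
    | linear_combination ((starRingEnd ℂ) (E 0)) * hlam
    | linear_combination ((starRingEnd ℂ) (E 1)) * hlam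
end

section
/- Let X(t) be a 3×3 matrix with tr X(t) = −ik, and suppose ṽ(t), w̃(t) ∈ ℂ³ solve the adjoint equation u_t = X̃u where X̃ := −ikJ + Q* and X = ikJ + Q with J = diag(1,−1,−1), Q = [[0,−Eᵀ],[E*,0]] for E(t) ∈ ℂ² and k ∈ ℝ. Then u(t) := e^{−ikt}·(ṽ(t) × w̃(t)) (cross product in ℂ³, without complex conjugation) solves u_t = X u. -/
open Matrix

/-- The 3×3 potential matrix built from a vector field envelope E ∈ ℂ². -/
def Qof (E : Fin 2 → ℂ) : Matrix (Fin 3) (Fin 3) ℂ :=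
  !![0, -(E 0), -(E 1); starRingEnd ℂ (E 0), 0, 0; starRingEnd ℂ (E 1), 0, 0]

/-- J = diag(1,−1,−1). -/
def Jmat : Matrix (Fin 3) (Fin 3) ℂ := Matrix.diagonal ![1, -1, -1]

/-- If ṽ, w̃ solve the adjoint problem u_t = (−ikJ + Q*)u, then
u(t) := e^{−ikt}·(ṽ × w̃) (bilinear cross product in ℂ³) solves u_t = (ikJ + Q)u. -/
theorem stmt9 (k : ℝ) (E : ℝ → Fin 2 → ℂ) (v w : ℝ → Fin 3 → ℂ)
    (hv : ∀ t, ∀ i : Fin 3, HasDerivAt (fun t' => v t' i)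
      ((((-(Complex.I * (k:ℂ))) • Jmat + (Qof (E t)).map (starRingEnd ℂ)).mulVec (v t)) i) t)
    (hw : ∀ t, ∀ i : Fin 3, HasDerivAt (fun t' => w t' i)
      ((((-(Complex.I * (k:ℂ))) • Jmat + (Qof (E t)).map (starRingEnd ℂ)).mulVec (w t)) i) t) :
    ∀ t, ∀ i : Fin 3, HasDerivAt
      (fun t' : ℝ => Complex.exp (-(Complex.I * (k:ℂ) * (t':ℂ))) * (crossProduct (v t') (w t')) i)
      ((((Complex.I * (k:ℂ)) • Jmat + Qof (E t)).mulVec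
        (fun j => Complex.exp (-(Complex.I * (k:ℂ) * (t:ℂ))) * (crossProduct (v t) (w t)) j)) i) t := by
  intro t i
  have he : HasDerivAt (fun t' : ℝ => Complex.exp (-(Complex.I * (k:ℂ) * (t':ℂ))))
      (-(Complex.I * (k:ℂ)) * Complex.exp (-(Complex.I * (k:ℂ) * (t:ℂ)))) t := by
    have h1 : HasDerivAt (fun t' : ℝ => -(Complex.I * (k:ℂ) * (t':ℂ))) (-(Complex.I * (k:ℂ))) t := by
      have := ((Complex.ofRealCLM.hasDerivAt (x := t)).const_mul (Complex.I * (k:ℂ))).neg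
      convert this using 1
      · rfl
      · rfl
      · simp
    simpa [mul_comm] using h1.cexp
  fin_cases i
  · have h := he.mul (((hv t 1).mul (hw t 2)).sub ((hv t 2).mul (hw t 1)))
    convert h using 1
    · rfl
    · rfl
    · simp [Qof, Jmat, Matrix.mulVec, dotProduct, cross_apply, Fin.sum_univ_succ,
        Matrix.diagonal, Matrix.map_apply]
      ring
  · have h := he.mul (((hv t 2).mul (hw t 0)).sub ((hv t 0).mul (hw t 2)))
    convert h using 1
    · rfl
    · rfl
    · simp [Qof, Jmat, Matrix.mulVec, dotProduct, cross_apply, Fin.sum_univ_succ,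
        Matrix.diagonal, Matrix.map_apply]
      ring
  · have h := he.mul (((hv t 0).mul (hw t 1)).sub ((hv t 1).mul (hw t 0)))
    convert h using 1
    · rfl
    · rfl
    · simp [Qof, Jmat, Matrix.mulVec, dotProduct, cross_apply, Fin.sum_univ_succ,
        Matrix.diagonal, Matrix.map_apply]
      ring
end

section
/- Let E0 > 0, E ∈ ℂ² with ‖E‖ = E0, and ζ ∈ ℝ \ {0} with λ := (ζ + E0²/ζ)/2. Let Y(ζ) be the eigenvector matrix with columns (1, −iE*/ζ)ᵀ, (0, (E^⊥)*/E0)ᵀ, (−iE0/ζ, E*/E0)ᵀ, and Π₀(ζ) := diag(γ(ζ), 1, γ(ζ)) with γ(ζ) = 1 + E0²/ζ². Then Y(ζ)† = Π₀(ζ)·Y(ζ)⁻¹. -/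
open Matrix

set_option maxHeartbeats 2000000 in
/-- For real ζ ≠ 0, the eigenvector matrix Y(ζ) satisfies Y(ζ)† = Π₀(ζ)·Y(ζ)⁻¹
with Π₀(ζ) = diag(γ, 1, γ), γ = 1 + E0²/ζ². -/
theorem stmt11 (E0 : ℝ) (hE0 : 0 < E0) (ζ : ℝ) (hζ : ζ ≠ 0)
    (E : Fin 2 → ℂ) (hE : ‖E 0‖^2 + ‖E 1‖^2 = E0^2) :
    let z : ℂ := (ζ : ℂ)
    let γ : ℂ := 1 + (E0 : ℂ)^2/z^2
    let Y : Matrix (Fin 3) (Fin 3) ℂ :=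
      !![1, 0, -Complex.I*E0/z;
         -Complex.I*(starRingEnd ℂ (E 0))/z, (E 1)/E0, (starRingEnd ℂ (E 0))/E0;
         -Complex.I*(starRingEnd ℂ (E 1))/z, -(E 0)/E0, (starRingEnd ℂ (E 1))/E0]
    let Pi0 : Matrix (Fin 3) (Fin 3) ℂ := Matrix.diagonal ![γ, 1, γ]
    Yᴴ = Pi0 * Y⁻¹ := by
  intro z γ Y Pi0
  have hzdef : z = (ζ : ℂ) := rfl
  have hγdef : γ = 1 + (E0 : ℂ)^2/z^2 := rfl
  have hY : Y =
      !![1, 0, -Complex.I*E0/z;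
         -Complex.I*(starRingEnd ℂ (E 0))/z, (E 1)/E0, (starRingEnd ℂ (E 0))/E0;
         -Complex.I*(starRingEnd ℂ (E 1))/z, -(E 0)/E0, (starRingEnd ℂ (E 1))/E0] := rfl
  have hz : z ≠ 0 := Complex.ofReal_ne_zero.mpr hζ
  have hE0' : (E0 : ℂ) ≠ 0 := Complex.ofReal_ne_zero.mpr hE0.ne'
  have hγreal : γ = ((1 + (E0/ζ)^2 : ℝ) : ℂ) := by
    rw [hγdef, hzdef]; push_cast; ring
  have hγ : γ ≠ 0 := by
    rw [hγreal]
    exact_mod_cast (by positivity : (0:ℝ) < 1 + (E0/ζ)^2).ne'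
  have h0 : (starRingEnd ℂ) (E 0) * E 0 = ((‖E 0‖ ^ 2 : ℝ) : ℂ) := by
    rw [mul_comm, Complex.mul_conj, Complex.sq_norm]
  have h1 : (starRingEnd ℂ) (E 1) * E 1 = ((‖E 1‖ ^ 2 : ℝ) : ℂ) := by
    rw [mul_comm, Complex.mul_conj, Complex.sq_norm]
  have key : (starRingEnd ℂ (E 0)) * E 0 + (starRingEnd ℂ (E 1)) * E 1 = (E0:ℂ)^2 := by
    rw [h0, h1]; push_cast; exact_mod_cast congrArg Complex.ofReal hE
  have hs : z^2 + (E0:ℂ)^2 ≠ 0 := by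
    have : z^2 + (E0:ℂ)^2 = ((ζ^2 + E0^2 : ℝ) : ℂ) := by rw [hzdef]; push_cast; ring
    rw [this]
    exact_mod_cast (by positivity : (0:ℝ) < ζ^2 + E0^2).ne'
  have hd : z ^ 2 * (E0:ℂ) ^ 6 + z ^ 4 * (E0:ℂ) ^ 4 ≠ 0 := by
    have : z ^ 2 * (E0:ℂ) ^ 6 + z ^ 4 * (E0:ℂ) ^ 4 = z^2 * (E0:ℂ)^4 * (z^2 + (E0:ℂ)^2) := by
      ring
    rw [this]
    exact mul_ne_zero (mul_ne_zero (pow_ne_zero _ hz) (pow_ne_zero _ hE0')) hs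
  have hzc : starRingEnd ℂ z = z := Complex.conj_ofReal ζ
  have hBY : (Matrix.diagonal ![γ⁻¹, 1, γ⁻¹] * Yᴴ) * Y = 1 := by
    rw [Matrix.mul_assoc]
    ext i j
    fin_cases i <;> fin_cases j <;>
      simp [Matrix.mul_apply, Fin.sum_univ_three, hY, Matrix.diagonal,
        hzc, Complex.conj_ofReal, _root_.map_mul, _root_.map_div₀, Complex.conj_I] <;>
      (try rw [hγdef]) <;> (try field_simp [hs]) <;> (try ring_nf) <;>
      (try simp [Complex.I_sq]) <;> (try ring_nf) <;>
      (first
        | linear_combination z^2 * key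
        | linear_combination key
        | linear_combination Complex.I*(E0:ℂ)*z^2 * key
        | linear_combination (-(Complex.I*(E0:ℂ)*z^2)) * key
        | (field_simp [hd]; right; first | linear_combination Complex.I * key | linear_combination (-Complex.I) * key))
  have hYinv : Y⁻¹ = Matrix.diagonal ![γ⁻¹, 1, γ⁻¹] * Yᴴ := Matrix.inv_eq_left_inv hBY
  show Yᴴ = Matrix.diagonal ![γ, 1, γ] * Y⁻¹
  rw [hYinv, ← Matrix.mul_assoc]
  have hone : Matrix.diagonal ![γ, 1, γ] * Matrix.diagonal ![γ⁻¹, 1, γ⁻¹] = 1 := by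
    ext i j
    fin_cases i <;> fin_cases j <;>
      simp [Matrix.mul_apply, Fin.sum_univ_three, Matrix.diagonal, Matrix.one_apply,
        mul_inv_cancel₀ hγ]
  rw [hone, Matrix.one_mul]
end

section
/- Let E0 > 0, E ∈ ℂ² with ‖E‖ = E0, ζ ∈ ℂ \ {0} with ζ² ≠ −E0², λ = (ζ + E0²/ζ)/2, and Q = [[0,−Eᵀ],[E*,0]]. Let Y(ζ) be the eigenvector matrix (columns as above) and ϱ_dd = diag(ϱ₁, ϱ₂, ϱ₃) any real diagonal matrix. Then [J, Y(ζ) ϱ_dd Y(ζ)⁻¹] = −(i/λ)(ϱ₁ − ϱ₃)·J·Q. -/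
set_option maxHeartbeats 2000000

open Matrix

/-- Key commutator identity: for real diagonal ϱ_dd = diag(ϱ₁,ϱ₂,ϱ₃),
[J, Y(ζ) ϱ_dd Y(ζ)⁻¹] = −(i/λ)(ϱ₁ − ϱ₃) · J·Q. -/
theorem stmt13 (E0 : ℝ) (hE0 : 0 < E0) (ζ : ℂ) (hζ : ζ ≠ 0)
    (hζ2 : ζ^2 ≠ -(E0 : ℂ)^2)
    (E : Fin 2 → ℂ) (hE : ‖E 0‖^2 + ‖E 1‖^2 = E0^2)
    (ϱ₁ ϱ₂ ϱ₃ : ℝ) :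
    let lam : ℂ := (ζ + (E0 : ℂ)^2/ζ)/2
    let J : Matrix (Fin 3) (Fin 3) ℂ := Matrix.diagonal ![1, -1, -1]
    let Q : Matrix (Fin 3) (Fin 3) ℂ :=
      !![0, -(E 0), -(E 1); starRingEnd ℂ (E 0), 0, 0; starRingEnd ℂ (E 1), 0, 0]
    let Y : Matrix (Fin 3) (Fin 3) ℂ :=
      !![1, 0, -Complex.I*E0/ζ;
         -Complex.I*(starRingEnd ℂ (E 0))/ζ, (E 1)/E0, (starRingEnd ℂ (E 0))/E0;
         -Complex.I*(starRingEnd ℂ (E 1))/ζ, -(E 0)/E0, (starRingEnd ℂ (E 1))/E0]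
    let D : Matrix (Fin 3) (Fin 3) ℂ := Matrix.diagonal ![(ϱ₁ : ℂ), (ϱ₂ : ℂ), (ϱ₃ : ℂ)]
    J * (Y * D * Y⁻¹) - (Y * D * Y⁻¹) * J
      = (-(Complex.I/lam) * ((ϱ₁ : ℂ) - (ϱ₃ : ℂ))) • (J * Q) := by
  intro lam J Q Y D
  have hE0c : (E0 : ℂ) ≠ 0 := by exact_mod_cast hE0.ne'
  set a : ℂ := E 0
  set b : ℂ := E 1
  set ac : ℂ := starRingEnd ℂ (E 0)
  set bc : ℂ := starRingEnd ℂ (E 1)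
  have key : ac * a + bc * b = (E0 : ℂ)^2 := by
    have h1 : ac * a = (Complex.normSq a : ℂ) := (Complex.normSq_eq_conj_mul_self (z := a)).symm
    have h2 : bc * b = (Complex.normSq b : ℂ) := (Complex.normSq_eq_conj_mul_self (z := b)).symm
    rw [h1, h2, ← Complex.ofReal_add, ← Complex.sq_norm a, ← Complex.sq_norm b, hE]
    push_cast
    ring
  have hQ : Q = !![0, -a, -b; ac, 0, 0; bc, 0, 0] := rfl
  have hY : Y = !![1, 0, -Complex.I*E0/ζ;
         -Complex.I*ac/ζ, b/E0, ac/E0;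
         -Complex.I*bc/ζ, -a/E0, bc/E0] := rfl
  clear_value a b ac bc
  have hγ0 : ζ^2 + (E0:ℂ)^2 ≠ 0 := by
    intro h
    apply hζ2
    linear_combination h
  have hlam : lam ≠ 0 := by
    show (ζ + (E0 : ℂ)^2/ζ)/2 ≠ 0
    field_simp
    intro h
    exact hγ0 (by rcases div_eq_zero_iff.mp h with h | h; exact h; exact absurd h (mul_ne_zero hζ two_ne_zero))
  set B : Matrix (Fin 3) (Fin 3) ℂ :=
    !![ζ^2/(ζ^2+(E0:ℂ)^2), Complex.I*a*ζ/(ζ^2+(E0:ℂ)^2), Complex.I*b*ζ/(ζ^2+(E0:ℂ)^2);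
       0, bc/E0, -ac/E0;
       Complex.I*E0*ζ/(ζ^2+(E0:ℂ)^2), a*ζ^2/(E0*(ζ^2+(E0:ℂ)^2)), b*ζ^2/(E0*(ζ^2+(E0:ℂ)^2))] with hB
  have hYB : Y * B = 1 := by
    rw [hY, hB]
    ext i j
    fin_cases i <;> fin_cases j <;>
      simp [Matrix.mul_apply, Fin.sum_univ_three, Matrix.one_apply] <;>
      field_simp <;>
      (try ring_nf) <;>
      (try simp only [Complex.I_sq]) <;>
      first
        | ring1
        | linear_combination (norm := ring1) key
        | linear_combination (norm := ring1) (-key)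
        | linear_combination (norm := ring1) (ζ^2 + (E0:ℂ)^2) * key
        | linear_combination (norm := ring1) (-(ζ^2 + (E0:ℂ)^2)) * key
        | linear_combination (norm := ring1) ζ^2 * key
        | linear_combination (norm := ring1) (-ζ^2) * key
        | linear_combination (norm := ring1) (E0:ℂ)^2 * key
        | linear_combination (norm := ring1) (-(E0:ℂ)^2) * key
        | linear_combination (norm := ring1) ((E0:ℂ)^2 * (ζ^2 + (E0:ℂ)^2)) * key
        | linear_combination (norm := ring1) (-((E0:ℂ)^2 * (ζ^2 + (E0:ℂ)^2))) * key
        | linear_combination (norm := ring1) (ζ^2 * (ζ^2 + (E0:ℂ)^2)) * key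
        | linear_combination (norm := ring1) (-(ζ^2 * (ζ^2 + (E0:ℂ)^2))) * key
        | linear_combination (norm := ring1) (ζ * (E0:ℂ)^2 * (ζ^2 + (E0:ℂ)^2)^2) * key
        | linear_combination (norm := ring1) (-(ζ * (E0:ℂ)^2 * (ζ^2 + (E0:ℂ)^2)^2)) * key
        | linear_combination (norm := ring1) (ζ * (ζ^2 + (E0:ℂ)^2)^2) * key
        | linear_combination (norm := ring1) (-(ζ * (ζ^2 + (E0:ℂ)^2)^2)) * key
        | linear_combination (norm := ring1) (ζ^2 * (E0:ℂ)^2 * (ζ^2 + (E0:ℂ)^2)^2) * key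
        | linear_combination (norm := ring1) (-(ζ^2 * (E0:ℂ)^2 * (ζ^2 + (E0:ℂ)^2)^2)) * key
        | linear_combination (norm := ring1) ((E0:ℂ)^2 * (ζ^2 + (E0:ℂ)^2)^2) * key
        | linear_combination (norm := ring1) (-((E0:ℂ)^2 * (ζ^2 + (E0:ℂ)^2)^2)) * key
  have hYinv : Y⁻¹ = B := Matrix.inv_eq_right_inv hYB
  rw [hYinv]
  have hD : D = !![(ϱ₁:ℂ),0,0;0,(ϱ₂:ℂ),0;0,0,(ϱ₃:ℂ)] := by
    ext i j
    fin_cases i <;> fin_cases j <;>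
      simp [D, Matrix.diagonal, Matrix.vecHead, Matrix.vecTail]
  have hJ : J = !![1,0,0;0,-1,0;0,0,-1] := by
    ext i j
    fin_cases i <;> fin_cases j <;>
      simp [J, Matrix.diagonal, Matrix.vecHead, Matrix.vecTail]
  set N : Matrix (Fin 3) (Fin 3) ℂ :=
    !![((ϱ₁:ℂ)*ζ^2 + (ϱ₃:ℂ)*(E0:ℂ)^2)/(ζ^2+(E0:ℂ)^2),
       Complex.I*a*ζ*((ϱ₁:ℂ)-(ϱ₃:ℂ))/(ζ^2+(E0:ℂ)^2),
       Complex.I*b*ζ*((ϱ₁:ℂ)-(ϱ₃:ℂ))/(ζ^2+(E0:ℂ)^2);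
       -Complex.I*ac*ζ*((ϱ₁:ℂ)-(ϱ₃:ℂ))/(ζ^2+(E0:ℂ)^2),
       (ϱ₁:ℂ)*ac*a/(ζ^2+(E0:ℂ)^2) + (ϱ₂:ℂ)*b*bc/(E0:ℂ)^2 + (ϱ₃:ℂ)*ac*a*ζ^2/((E0:ℂ)^2*(ζ^2+(E0:ℂ)^2)),
       (ϱ₁:ℂ)*ac*b/(ζ^2+(E0:ℂ)^2) - (ϱ₂:ℂ)*ac*b/(E0:ℂ)^2 + (ϱ₃:ℂ)*ac*b*ζ^2/((E0:ℂ)^2*(ζ^2+(E0:ℂ)^2));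
       -Complex.I*bc*ζ*((ϱ₁:ℂ)-(ϱ₃:ℂ))/(ζ^2+(E0:ℂ)^2),
       (ϱ₁:ℂ)*a*bc/(ζ^2+(E0:ℂ)^2) - (ϱ₂:ℂ)*a*bc/(E0:ℂ)^2 + (ϱ₃:ℂ)*a*bc*ζ^2/((E0:ℂ)^2*(ζ^2+(E0:ℂ)^2)),
       (ϱ₁:ℂ)*bc*b/(ζ^2+(E0:ℂ)^2) + (ϱ₂:ℂ)*a*ac/(E0:ℂ)^2 + (ϱ₃:ℂ)*bc*b*ζ^2/((E0:ℂ)^2*(ζ^2+(E0:ℂ)^2))] with hN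
  have hM : Y * D * B = N := by
    rw [hY, hD, hB, hN]
    ext i j
    fin_cases i <;> fin_cases j <;>
      simp [Matrix.mul_apply, Fin.sum_univ_three] <;>
      field_simp <;>
      (try ring_nf) <;>
      (try simp only [Complex.I_sq]) <;>
      (try ring1)
  rw [hM]
  have hlamv : lam = (ζ + (E0:ℂ)^2/ζ)/2 := rfl
  rw [hJ, hN, hQ, hlamv]
  ext i j
  fin_cases i <;> fin_cases j <;>
    simp [Matrix.mul_apply, Fin.sum_univ_three] <;>
    field_simp <;>
    (try ring_nf) <;>
    (try simp only [Complex.I_sq]) <;>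
    (try ring1) <;>
    (try (field_simp; ring1)) <;>
    (try simp [Matrix.vecHead, Matrix.vecTail])
end
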